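/- Let a, b, c : ℝ → ℝ be continuously differentiable with b(x) ≠ 0 for all x, and suppose c satisfies the constraint c'(x) + (a(x) − b'(x)/b(x))·c(x) = (2/9)·b(x)² for all x. Define F(x) = exp(∫₀ˣ a(ξ) dξ), G(x) = 3·c(x)·F(x)/b(x), and the reciprocal Lagrangian L(x, v, t) = 1/(F(x)·v + G(x)). Then a twice differentiable curve x : ℝ → ℝ with F(x(t))·x'(t) + G(x(t)) ≠ 0 for all t satisfies the Euler–Lagrange equation of L if and only if x''(t) + a(x(t))·x'(t)² + b(x(t))·x'(t) + c(x(t)) = 0 for all t ∈ ℝ. -/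

import Mathlib

/-- Partial derivative of the Lagrangian `L x v t` in the velocity argument. -/
noncomputable def pv (L : ℝ → ℝ → ℝ → ℝ) (x v t : ℝ) : ℝ := deriv (fun w => L x w t) v

/-- Partial derivative of the Lagrangian `L x v t` in the position argument. -/
noncomputable def px (L : ℝ → ℝ → ℝ → ℝ) (x v t : ℝ) : ℝ := deriv (fun y => L y v t) x

/-- A curve `x` satisfies the Euler–Lagrange equation of `L`:
`(d/dt)[(∂L/∂v)(x t, x' t, t)] = (∂L/∂x)(x t, x' t, t)` for all `t`. -/
def SatisfiesEL (L : ℝ → ℝ → ℝ → ℝ) (x : ℝ → ℝ) : Prop :=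
  ∀ t : ℝ, deriv (fun s => pv L (x s) (deriv x s) s) t = px L (x t) (deriv x t) t

/-- Partial derivative of `f (x, t)` in the first argument. -/
noncomputable def pd1 (f : ℝ × ℝ → ℝ) (x t : ℝ) : ℝ := deriv (fun y => f (y, t)) x

/-- Partial derivative of `f (x, t)` in the second argument. -/
noncomputable def pd2 (f : ℝ × ℝ → ℝ) (x t : ℝ) : ℝ := deriv (fun s => f (x, s)) t

theorem reciprocal_lagrangian_autonomous
    (a b c : ℝ → ℝ) (ha : ContDiff ℝ 1 a) (hb : ContDiff ℝ 1 b) (hc : ContDiff ℝ 1 c)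
    (hbne : ∀ x : ℝ, b x ≠ 0)
    (hconstraint : ∀ x : ℝ,
      deriv c x + (a x - deriv b x / b x) * c x = (2/9) * (b x) ^ 2)
    (F G : ℝ → ℝ)
    (hF : ∀ x : ℝ, F x = Real.exp (∫ ξ in (0:ℝ)..x, a ξ))
    (hG : ∀ x : ℝ, G x = 3 * c x * F x / b x)
    (L : ℝ → ℝ → ℝ → ℝ) (hL : ∀ x v t : ℝ, L x v t = 1 / (F x * v + G x))
    (x : ℝ → ℝ) (hx : Differentiable ℝ x) (hx' : Differentiable ℝ (deriv x))
    (hne : ∀ t : ℝ, F (x t) * deriv x t + G (x t) ≠ 0) :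
    SatisfiesEL L x ↔
      ∀ t : ℝ, deriv (deriv x) t + a (x t) * (deriv x t) ^ 2
        + b (x t) * deriv x t + c (x t) = 0 := by
  -- positivity and nonvanishing of F
  have hFpos : ∀ y, 0 < F y := by intro y; rw [hF]; exact Real.exp_pos _
  have hFne : ∀ y, F y ≠ 0 := fun y => (hFpos y).ne'
  -- derivative of F
  have hFd : ∀ y, HasDerivAt F (a y * F y) y := by
    intro y
    have hint : HasDerivAt (fun u => ∫ ξ in (0:ℝ)..u, a ξ) (a y) y :=
      intervalIntegral.integral_hasDerivAt_right
        (ha.continuous.intervalIntegrable _ _)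
        (ha.continuous.stronglyMeasurableAtFilter _ _)
        ha.continuous.continuousAt
    have h2 := hint.exp
    have hFfun : F = fun u => Real.exp (∫ ξ in (0:ℝ)..u, a ξ) := funext hF
    rw [hFfun]
    simpa [hF y, mul_comm] using h2
  have hbd : ∀ y, HasDerivAt b (deriv b y) y := fun y => (hb.differentiable one_ne_zero y).hasDerivAt
  have hcd : ∀ y, HasDerivAt c (deriv c y) y := fun y => (hc.differentiable one_ne_zero y).hasDerivAt
  -- derivative of G
  have hGd : ∀ y, HasDerivAt G (2/3 * (F y * b y)) y := by
    intro y
    have hGfun : G = fun u => 3 * c u * F u / b u := funext hG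
    have h1 : HasDerivAt (fun u => 3 * c u * F u / b u)
        ((((3 * deriv c y) * F y + 3 * c y * (a y * F y)) * b y
          - 3 * c y * F y * deriv b y) / (b y) ^ 2) y :=
      (((hcd y).const_mul 3).mul (hFd y)).div (hbd y) (hbne y)
    have hval : (((3 * deriv c y) * F y + 3 * c y * (a y * F y)) * b y
          - 3 * c y * F y * deriv b y) / (b y) ^ 2 = 2/3 * (F y * b y) := by
      rw [div_eq_iff (pow_ne_zero 2 (hbne y))]
      have hb' : deriv b y / b y * b y = deriv b y := div_mul_cancel₀ _ (hbne y)
      linear_combination 3 * F y * b y * hconstraint y + 3 * F y * c y * hb'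
    rw [hGfun]
    exact hval ▸ h1
  -- closed form for pv along the curve
  have hpv_eq : (fun s => pv L (x s) (deriv x s) s)
      = fun s => -F (x s) / (F (x s) * deriv x s + G (x s)) ^ 2 := by
    funext s
    unfold pv
    have hLfun : (fun w => L (x s) w s) = fun w => (F (x s) * w + G (x s))⁻¹ := by
      funext w; rw [hL, one_div]
    rw [hLfun]
    have hlin : HasDerivAt (fun w => F (x s) * w + G (x s)) (F (x s)) (deriv x s) := by
      simpa using ((hasDerivAt_id (deriv x s)).const_mul (F (x s))).add_const (G (x s))
    exact (hlin.inv (hne s)).deriv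
  -- EL is a pointwise condition; establish the pointwise iff
  unfold SatisfiesEL
  apply forall_congr'
  intro t
  have hxd : HasDerivAt x (deriv x t) t := (hx t).hasDerivAt
  have hVd : HasDerivAt (deriv x) (deriv (deriv x) t) t := (hx' t).hasDerivAt
  set X := x t with hXdef
  set V := deriv x t with hVdef
  set A := deriv (deriv x) t with hAdef
  have hDne : F X * V + G X ≠ 0 := hne t
  -- px closed form
  have hpx : px L X V t = -(a X * F X * V + 2/3 * (F X * b X)) / (F X * V + G X) ^ 2 := by
    unfold px
    have hLfun : (fun y => L y V t) = fun y => (F y * V + G y)⁻¹ := by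
      funext y; rw [hL, one_div]
    rw [hLfun]
    have hlin : HasDerivAt (fun y => F y * V + G y) (a X * F X * V + 2/3 * (F X * b X)) X :=
      ((hFd X).mul_const V).add (hGd X)
    exact (hlin.inv hDne).deriv
  -- derivative of pv along the curve
  have hFX : HasDerivAt (fun s => F (x s)) (a X * F X * V) t := by
    exact ((hFd X).comp t hxd).congr_deriv (by ring)
  have hGX : HasDerivAt (fun s => G (x s)) (2/3 * (F X * b X) * V) t := (hGd X).comp t hxd
  have hDd : HasDerivAt (fun s => F (x s) * deriv x s + G (x s))
      (a X * F X * V * V + F X * A + 2/3 * (F X * b X) * V) t := by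
    have := (hFX.mul hVd).add hGX
    exact this.congr_deriv (by ring)
  have hD2 : HasDerivAt (fun s => (F (x s) * deriv x s + G (x s)) ^ 2)
      (2 * (F X * V + G X) * (a X * F X * V * V + F X * A + 2/3 * (F X * b X) * V)) t := by
    have := hDd.pow 2
    exact this.congr_deriv (by push_cast; ring)
  have hfull : HasDerivAt (fun s => -F (x s) / (F (x s) * deriv x s + G (x s)) ^ 2)
      ((-(a X * F X * V) * (F X * V + G X) ^ 2
        - (-F X) * (2 * (F X * V + G X)
            * (a X * F X * V * V + F X * A + 2/3 * (F X * b X) * V)))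
        / ((F X * V + G X) ^ 2) ^ 2) t :=
    hFX.neg.div hD2 (pow_ne_zero 2 hDne)
  rw [hpv_eq, hfull.deriv, hpx]
  -- now a pure algebra statement
  have hGb : G X * b X = 3 * c X * F X := by
    rw [hG]
    exact div_mul_cancel₀ _ (hbne X)
  rw [div_eq_div_iff (pow_ne_zero 2 (pow_ne_zero 2 hDne)) (pow_ne_zero 2 hDne)]
  constructor
  · intro h
    have h0 : 2 * F X ^ 2 * (A + a X * V ^ 2 + b X * V + c X) * (F X * V + G X) ^ 3 = 0 := by
      linear_combination h - 2/3 * F X * (F X * V + G X) ^ 3 * hGb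
    rcases mul_eq_zero.mp h0 with h1 | h1
    · rcases mul_eq_zero.mp h1 with h2 | h2
      · exact absurd h2 (by have := hFpos X; positivity)
      · linarith
    · exact absurd h1 (pow_ne_zero 3 hDne)
  · intro h
    linear_combination 2 * F X ^ 2 * (F X * V + G X) ^ 3 * h
      + 2/3 * F X * (F X * V + G X) ^ 3 * hGb
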